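/- Let A, B be bounded Hermitian operators with b_n(t) = ‖(e^{-i(t/n)A} e^{-i(t/n)B})^n - e^{-it(A+B)}‖. Then for all 0 ≤ t ≤ 2n/‖A‖: b_n(t) ≥ (t²/2n)(1 - (t/2n)‖A‖)(‖[A,B]‖ - (t/2)‖[A+B,[A,B]]‖) - (t³/24n²)‖[A,[A,B]]‖ - (t³/12n²)‖[B,[B,A]]‖. -/

import Mathlib

open Complex NormedSpace intervalIntegral

set_option synthInstance.maxHeartbeats 1000000
set_option maxHeartbeats 2000000
set_option linter.unusedSectionVars false

namespace TrotterLB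

variable {E : Type*} [NormedAddCommGroup E] [InnerProductSpace ℂ E] [CompleteSpace E]

/-- `ee X s = e^{-isX}`. -/
noncomputable def ee (X : E →L[ℂ] E) (s : ℝ) : E →L[ℂ] E := exp ((-(I * s)) • X)

/-- Conjugation `e^{-isX} C e^{isX}`. -/
noncomputable def Kc (X C : E →L[ℂ] E) (s : ℝ) : E →L[ℂ] E := ee X s * C * ee X (-s)

/-- Commutator. -/
def Lb (X C : E →L[ℂ] E) : E →L[ℂ] E := X * C - C * X

lemma real_smul_eq (r : ℝ) (M : E →L[ℂ] E) : r • M = (r : ℂ) • M := by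
  rw [← Complex.coe_algebraMap, algebraMap_smul]

lemma ee_eq (X : E →L[ℂ] E) (s : ℝ) : ee X s = exp (s • ((-I) • X)) := by
  rw [ee]
  congr 1
  rw [← Complex.coe_algebraMap, ← algebraMap_smul ℂ s ((-I) • X), smul_smul]
  congr 1; ring

lemma ee_zero (X : E →L[ℂ] E) : ee X 0 = 1 := by
  simp [ee_eq, exp_zero]

lemma ee_add (X : E →L[ℂ] E) (s r : ℝ) : ee X s * ee X r = ee X (s + r) := by
  simp only [ee_eq]
  letI : NormedAlgebra ℚ (E →L[ℂ] E) := NormedAlgebra.restrictScalars ℚ ℂ _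
  rw [← exp_add_of_commute (((Commute.refl ((-I) • X)).smul_left s).smul_right r), ← add_smul]

lemma ee_neg_mul (X : E →L[ℂ] E) (s : ℝ) : ee X (-s) * ee X s = 1 := by
  rw [ee_add, neg_add_cancel, ee_zero]

lemma ee_mul_neg (X : E →L[ℂ] E) (s : ℝ) : ee X s * ee X (-s) = 1 := by
  rw [ee_add, add_neg_cancel, ee_zero]

lemma ee_cancel (X : E →L[ℂ] E) (a : ℝ) (M : E →L[ℂ] E) :
    ee X a * (ee X (-a) * M) = M := by
  rw [← mul_assoc, ee_add, add_neg_cancel, ee_zero, one_mul]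

lemma ee_cancel' (X : E →L[ℂ] E) (a : ℝ) (M : E →L[ℂ] E) :
    ee X (-a) * (ee X a * M) = M := by
  rw [← mul_assoc, ee_add, neg_add_cancel, ee_zero, one_mul]

lemma ee_hasDerivAt (X : E →L[ℂ] E) (s : ℝ) :
    HasDerivAt (fun r => ee X r) (((-I) • X) * ee X s) s := by
  simp only [ee_eq]
  exact hasDerivAt_exp_smul_const' ((-I) • X) s

lemma ee_cont (X : E →L[ℂ] E) : Continuous (ee X) :=
  continuous_iff_continuousAt.2 fun s => (ee_hasDerivAt X s).continuousAt

lemma commute_ee (X : E →L[ℂ] E) (s : ℝ) : Commute X (ee X s) := by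
  rw [ee_eq]
  exact (((Commute.refl X).smul_right (-I)).smul_right s).exp_right

lemma star_ee {X : E →L[ℂ] E} (hX : IsSelfAdjoint X) (s : ℝ) :
    star (ee X s) = ee X (-s) := by
  rw [ee, ee, star_exp]
  congr 1
  rw [star_smul, hX.star_eq]
  congr 1
  simp only [star_neg, star_mul', Complex.star_def, Complex.conj_I, Complex.conj_ofReal,
    Complex.ofReal_neg]
  ring

lemma ee_apply_norm {X : E →L[ℂ] E} (hX : IsSelfAdjoint X) (s : ℝ) (x : E) :
    ‖ee X s x‖ = ‖x‖ := by
  have h1 : star (ee X s) * ee X s = 1 := by rw [star_ee hX, ee_neg_mul]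
  have h2 : (inner ℂ (ee X s x) (ee X s x) : ℂ) = inner ℂ x x := by
    calc (inner ℂ (ee X s x) (ee X s x) : ℂ)
        = inner ℂ ((ContinuousLinearMap.adjoint (ee X s)) (ee X s x)) x :=
          (ContinuousLinearMap.adjoint_inner_left _ _ _).symm
      _ = inner ℂ x x := by
          rw [← ContinuousLinearMap.star_eq_adjoint, ← ContinuousLinearMap.mul_apply, h1,
            ContinuousLinearMap.one_apply]
  rw [inner_self_eq_norm_sq_to_K (𝕜 := ℂ), inner_self_eq_norm_sq_to_K (𝕜 := ℂ)] at h2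
  have h3 : (‖ee X s x‖ : ℝ) ^ 2 = ‖x‖ ^ 2 := by exact_mod_cast h2
  nlinarith [norm_nonneg (ee X s x), norm_nonneg x]

lemma norm_ee_mul {X : E →L[ℂ] E} (hX : IsSelfAdjoint X) (s : ℝ) (C : E →L[ℂ] E) :
    ‖ee X s * C‖ = ‖C‖ := by
  refine le_antisymm (ContinuousLinearMap.opNorm_le_bound _ (norm_nonneg C) fun x => ?_)
    (ContinuousLinearMap.opNorm_le_bound _ (norm_nonneg _) fun x => ?_)
  · rw [ContinuousLinearMap.mul_apply, ee_apply_norm hX]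
    exact C.le_opNorm x
  · calc ‖C x‖ = ‖(ee X s * C) x‖ := by rw [ContinuousLinearMap.mul_apply, ee_apply_norm hX]
      _ ≤ ‖ee X s * C‖ * ‖x‖ := (ee X s * C).le_opNorm x

lemma norm_mul_ee {X : E →L[ℂ] E} (hX : IsSelfAdjoint X) (s : ℝ) (C : E →L[ℂ] E) :
    ‖C * ee X s‖ = ‖C‖ := by
  refine le_antisymm (ContinuousLinearMap.opNorm_le_bound _ (norm_nonneg C) fun x => ?_)
    (ContinuousLinearMap.opNorm_le_bound _ (norm_nonneg _) fun x => ?_)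
  · rw [ContinuousLinearMap.mul_apply]
    calc ‖C (ee X s x)‖ ≤ ‖C‖ * ‖ee X s x‖ := C.le_opNorm _
      _ = ‖C‖ * ‖x‖ := by rw [ee_apply_norm hX]
  · have hx : ee X s (ee X (-s) x) = x := by
      rw [← ContinuousLinearMap.mul_apply, ee_mul_neg, ContinuousLinearMap.one_apply]
    calc ‖C x‖ = ‖(C * ee X s) (ee X (-s) x)‖ := by
          rw [ContinuousLinearMap.mul_apply, hx]
      _ ≤ ‖C * ee X s‖ * ‖ee X (-s) x‖ := (C * ee X s).le_opNorm _
      _ = ‖C * ee X s‖ * ‖x‖ := by rw [ee_apply_norm hX]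

lemma norm_ee_le_one {X : E →L[ℂ] E} (hX : IsSelfAdjoint X) (s : ℝ) : ‖ee X s‖ ≤ 1 := by
  have h : ‖ee X s‖ = ‖(1 : E →L[ℂ] E)‖ := by
    conv_lhs => rw [← one_mul (ee X s)]
    exact norm_mul_ee hX s 1
  rw [h, ContinuousLinearMap.one_def]
  exact ContinuousLinearMap.norm_id_le

lemma norm_Kc {X : E →L[ℂ] E} (hX : IsSelfAdjoint X) (C : E →L[ℂ] E) (s : ℝ) :
    ‖Kc X C s‖ = ‖C‖ := by
  rw [Kc, norm_mul_ee hX, norm_ee_mul hX]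

lemma Kc_cont (X C : E →L[ℂ] E) : Continuous (Kc X C) :=
  ((ee_cont X).mul continuous_const).mul ((ee_cont X).comp continuous_neg)

lemma ftc {f g : ℝ → E →L[ℂ] E} (hf : ∀ s, HasDerivAt f (g s) s) (hg : Continuous g) (τ : ℝ) :
    f τ - f 0 = ∫ s in (0:ℝ)..τ, g s :=
  (integral_eq_sub_of_hasDerivAt (fun s _ => hf s)
    (hg.intervalIntegrable _ _)).symm

lemma norm_int_le {g : ℝ → E →L[ℂ] E} {c : ℝ → ℝ} (hg : Continuous g) (hc : Continuous c)
    {τ : ℝ} (hτ : 0 ≤ τ) (h : ∀ s ∈ Set.Icc (0:ℝ) τ, ‖g s‖ ≤ c s) :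
    ‖∫ s in (0:ℝ)..τ, g s‖ ≤ ∫ s in (0:ℝ)..τ, c s := by
  calc ‖∫ s in (0:ℝ)..τ, g s‖ ≤ ∫ s in (0:ℝ)..τ, ‖g s‖ :=
        norm_integral_le_integral_norm hτ
    _ ≤ ∫ s in (0:ℝ)..τ, c s :=
        integral_mono_on hτ (hg.norm.intervalIntegrable _ _)
          (hc.intervalIntegrable _ _) h

lemma hda_conv {f : ℝ → E →L[ℂ] E} {a b : E →L[ℂ] E} {x : ℝ} (h : HasDerivAt f b x)
    (e : a = b) : HasDerivAt f a x := e ▸ h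

lemma ee_neg_hasDerivAt (X : E →L[ℂ] E) (s : ℝ) :
    HasDerivAt (fun r => ee X (-r)) (I • X * ee X (-s)) s := by
  have h := ((ee_hasDerivAt X (-s)).scomp s (hasDerivAt_neg s))
  refine hda_conv h ?_
  norm_num [real_smul_eq, smul_mul_assoc, smul_smul]

lemma Kc_hasDerivAt (X C : E →L[ℂ] E) (s : ℝ) :
    HasDerivAt (Kc X C) (Kc X ((-I) • Lb X C) s) s := by
  have h1 := ((ee_hasDerivAt X s).mul_const C).mul (ee_neg_hasDerivAt X s)
  refine hda_conv h1 ?_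
  simp only [Kc, Lb, smul_sub, mul_sub, sub_mul, smul_mul_assoc, mul_smul_comm]
  have e1 : ee X s * (X * C) * ee X (-s) = X * ee X s * C * ee X (-s) := by
    rw [← mul_assoc, ← (commute_ee X s).eq]
  have e2 : ee X s * (C * X) * ee X (-s) = ee X s * C * (X * ee X (-s)) := by
    simp [mul_assoc]
  rw [e1, e2]
  simp [sub_eq_add_neg, neg_smul, neg_neg]

lemma Kc_zero (X C : E →L[ℂ] E) : Kc X C 0 = C := by
  simp [Kc, ee_zero, neg_zero]

lemma Kc_sub_eq (X C : E →L[ℂ] E) (τ : ℝ) :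
    Kc X C τ - C = ∫ v in (0:ℝ)..τ, Kc X ((-I) • Lb X C) v := by
  have h := ftc (Kc_hasDerivAt X C) (Kc_cont X _) τ
  rwa [Kc_zero] at h

lemma norm_smul_negI (M : E →L[ℂ] E) : ‖(-I : ℂ) • M‖ = ‖M‖ := by
  rw [norm_smul]; simp

lemma norm_Kc_sub_le {X : E →L[ℂ] E} (hX : IsSelfAdjoint X) (C : E →L[ℂ] E) {τ : ℝ}
    (hτ : 0 ≤ τ) : ‖Kc X C τ - C‖ ≤ τ * ‖Lb X C‖ := by
  rw [Kc_sub_eq]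
  calc ‖∫ v in (0:ℝ)..τ, Kc X ((-I) • Lb X C) v‖ ≤ ∫ _v in (0:ℝ)..τ, ‖Lb X C‖ := by
        apply norm_int_le (Kc_cont X _) continuous_const hτ
        intro s _
        rw [norm_Kc hX, norm_smul_negI]
    _ = τ * ‖Lb X C‖ := by simp

lemma Kc_comp (X C : E →L[ℂ] E) (v τ : ℝ) :
    Kc X C τ = ee X v * Kc X C (τ - v) * ee X (-v) := by
  simp only [Kc, ← mul_assoc]
  rw [ee_add]
  rw [mul_assoc _ (ee X (-(τ-v))) (ee X (-v)), ee_add]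
  ring_nf

lemma Kc_diff {X : E →L[ℂ] E} (hX : IsSelfAdjoint X) (C : E →L[ℂ] E) {v τ : ℝ}
    (hv : v ≤ τ) : ‖Kc X C τ - Kc X C v‖ ≤ (τ - v) * ‖Lb X C‖ := by
  have h : Kc X C τ - Kc X C v = ee X v * (Kc X C (τ - v) - C) * ee X (-v) := by
    rw [mul_sub, sub_mul, ← Kc_comp]
    rfl
  rw [h, norm_mul_ee hX, norm_ee_mul hX]
  exact norm_Kc_sub_le hX C (by linarith)

/-- The first-order term in the expansion of `Kc`. -/
noncomputable def Dc (X C : E →L[ℂ] E) : E →L[ℂ] E := (-I) • Lb X C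

lemma Kc_expand (X C : E →L[ℂ] E) (s : ℝ) :
    Kc X C s = C + s • Dc X C + ∫ v in (0:ℝ)..s, (Kc X (Dc X C) v - Dc X C) := by
  have h := Kc_sub_eq X C s
  have hsub : ∫ v in (0:ℝ)..s, (Kc X (Dc X C) v - Dc X C)
      = (∫ v in (0:ℝ)..s, Kc X (Dc X C) v) - ∫ _v in (0:ℝ)..s, Dc X C :=
    integral_sub ((Kc_cont X _).intervalIntegrable _ _)
      (continuous_const.intervalIntegrable _ _)
  rw [hsub, integral_const]
  simp only [Dc]
  rw [← h]
  simp only [sub_zero]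
  abel

lemma Lb_smul (X : E →L[ℂ] E) (c : ℂ) (C : E →L[ℂ] E) : Lb X (c • C) = c • Lb X C := by
  simp [Lb, mul_smul_comm, smul_mul_assoc, smul_sub]

lemma Lb_swap (X Y : E →L[ℂ] E) : Lb X Y = -(Lb Y X) := by
  simp only [Lb, neg_sub]

lemma norm_Lb_smul_negI (X C : E →L[ℂ] E) : ‖Lb X ((-I) • C)‖ = ‖Lb X C‖ := by
  have : Lb X ((-I) • C) = (-I) • Lb X C := by
    simp [Lb, mul_smul_comm, smul_mul_assoc, smul_sub]
  rw [this, norm_smul_negI]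

lemma Kc_rem_bound {X : E →L[ℂ] E} (hX : IsSelfAdjoint X) (C : E →L[ℂ] E) {s : ℝ}
    (hs : 0 ≤ s) :
    ‖∫ v in (0:ℝ)..s, (Kc X (Dc X C) v - Dc X C)‖ ≤ s^2/2 * ‖Lb X (Lb X C)‖ := by
  have hb : ∀ v ∈ Set.Icc (0:ℝ) s, ‖Kc X (Dc X C) v - Dc X C‖ ≤ v * ‖Lb X (Lb X C)‖ := by
    intro v hv
    have := norm_Kc_sub_le hX (Dc X C) hv.1
    rwa [Dc, norm_Lb_smul_negI] at this
  calc ‖∫ v in (0:ℝ)..s, (Kc X (Dc X C) v - Dc X C)‖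
      ≤ ∫ v in (0:ℝ)..s, v * ‖Lb X (Lb X C)‖ :=
        norm_int_le ((Kc_cont X _).sub continuous_const)
          (continuous_id.mul continuous_const) hs hb
    _ = s^2/2 * ‖Lb X (Lb X C)‖ := by
        rw [integral_mul_const, integral_id]
        ring

/-- The symmetric Trotter step `e^{-isA/2} e^{-isB} e^{-isA/2}`. -/
noncomputable def Uu (A B : E →L[ℂ] E) (s : ℝ) : E →L[ℂ] E :=
  ee A (s/2) * ee B s * ee A (s/2)

/-- The instantaneous Hamiltonian generating `Uu`. -/
noncomputable def Ham (A B : E →L[ℂ] E) (s : ℝ) : E →L[ℂ] E :=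
  (2⁻¹ : ℂ) • A + Kc A B (s/2) + ee A (s/2) * Kc B ((2⁻¹ : ℂ) • A) s * ee A (-(s/2))

lemma ee_half_hasDerivAt (X : E →L[ℂ] E) (s : ℝ) :
    HasDerivAt (fun r => ee X (r/2)) ((2⁻¹ : ℂ) • (((-I) • X) * ee X (s/2))) s := by
  have h := (ee_hasDerivAt X (s/2)).scomp s ((hasDerivAt_id s).div_const 2)
  simpa [real_smul_eq] using (hda_conv h rfl : HasDerivAt (fun r => ee X (r/2)) _ s)

lemma Uu_hasDerivAt (A B : E →L[ℂ] E) (s : ℝ) :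
    HasDerivAt (Uu A B) ((-I) • (Ham A B s * Uu A B s)) s := by
  have h := ((ee_half_hasDerivAt A s).mul (ee_hasDerivAt B s)).mul (ee_half_hasDerivAt A s)
  refine hda_conv h ?_
  simp only [Uu, Ham, Kc, add_mul, mul_add, smul_mul_assoc, mul_smul_comm, smul_smul,
    smul_add, mul_assoc, ee_cancel, ee_cancel']
  norm_num
  ring_nf
  simp only [mul_assoc]

lemma Uu_cont (A B : E →L[ℂ] E) : Continuous (Uu A B) :=
  continuous_iff_continuousAt.2 fun s => (Uu_hasDerivAt A B s).continuousAt

lemma Uu_zero (A B : E →L[ℂ] E) : Uu A B 0 = 1 := by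
  simp [Uu, ee_zero]

lemma Ham_cont (A B : E →L[ℂ] E) : Continuous (Ham A B) := by
  apply Continuous.add
  apply Continuous.add
  · exact continuous_const
  · exact (Kc_cont A B).comp (continuous_id.div_const 2)
  · exact (((ee_cont A).comp (continuous_id.div_const 2)).mul (Kc_cont B _)).mul
      ((ee_cont A).comp ((continuous_id.div_const 2).neg))

lemma norm_mul_Uu {A B M : E →L[ℂ] E} (hA : IsSelfAdjoint A) (hB : IsSelfAdjoint B) (s : ℝ) :
    ‖M * Uu A B s‖ = ‖M‖ := by
  rw [Uu, ← mul_assoc, ← mul_assoc, norm_mul_ee hA, norm_mul_ee hB, norm_mul_ee hA]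

/-- The key estimate: `‖A + B - Ham A B s‖ ≤ s²/8 ‖[A,[A,B]]‖ + s²/4 ‖[B,[B,A]]‖`. -/
lemma Ham_est {A B : E →L[ℂ] E} (hA : IsSelfAdjoint A) (hB : IsSelfAdjoint B) {s : ℝ}
    (hs : 0 ≤ s) :
    ‖(A + B) - Ham A B s‖ ≤ s^2/8 * ‖Lb A (Lb A B)‖ + s^2/4 * ‖Lb B (Lb A B)‖ := by
  -- decomposition
  set D₁ := Dc A B with hD₁
  set ρ₂ := ∫ v in (0:ℝ)..s, (Kc B (Dc B ((2⁻¹ : ℂ) • A)) v - Dc B ((2⁻¹ : ℂ) • A)) with hρ₂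
  have hKB : Kc B ((2⁻¹ : ℂ) • A) s = (2⁻¹ : ℂ) • A + s • Dc B ((2⁻¹ : ℂ) • A) + ρ₂ :=
    Kc_expand B _ s
  have hD₂ : Dc B ((2⁻¹ : ℂ) • A) = (-(2⁻¹ : ℂ)) • D₁ := by
    rw [Dc, Lb_smul, Lb_swap B A, hD₁, Dc]
    rw [smul_neg, smul_neg, smul_smul, smul_smul, ← neg_smul]
    congr 1
    ring
  -- conjugate the middle factor
  have hconj : ee A (s/2) * Kc B ((2⁻¹ : ℂ) • A) s * ee A (-(s/2))
      = (2⁻¹ : ℂ) • A + ((-(s:ℂ))/2) • Kc A D₁ (s/2) + Kc A ρ₂ (s/2) := by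
    rw [hKB, hD₂]
    have hAconj : ee A (s/2) * ((2⁻¹ : ℂ) • A) * ee A (-(s/2)) = (2⁻¹ : ℂ) • A := by
      rw [mul_smul_comm, smul_mul_assoc]
      rw [show ee A (s/2) * A * ee A (-(s/2)) = A * (ee A (s/2) * ee A (-(s/2))) by
        rw [← (commute_ee A (s/2)).eq, mul_assoc]]
      rw [ee_mul_neg, mul_one]
    have hD2conj : ee A (s/2) * (s • ((-(2⁻¹ : ℂ)) • D₁)) * ee A (-(s/2))
        = ((-(s:ℂ))/2) • Kc A D₁ (s/2) := by
      rw [real_smul_eq, smul_smul, mul_smul_comm, smul_mul_assoc, Kc]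
      congr 1
      ring
    simp only [mul_add, add_mul]
    rw [hAconj, hD2conj]
    rfl
  have hdecomp : (A + B) - Ham A B s
      = (B - Kc A B (s/2)) + (((s:ℂ)/2) • Kc A D₁ (s/2) - Kc A ρ₂ (s/2)) := by
    rw [Ham, hconj]
    module
  -- first piece: B - Kc A B (s/2) + (s/2) • Kc A D₁ (s/2)
  have hB1 : B - Kc A B (s/2) = -∫ v in (0:ℝ)..(s/2), Kc A D₁ v := by
    have h0 : Kc A B (s/2) - B = ∫ v in (0:ℝ)..(s/2), Kc A D₁ v := by
      rw [hD₁, Dc]; exact Kc_sub_eq A B (s/2)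
    rw [← h0]; abel
  have hconst : ((s:ℂ)/2) • Kc A D₁ (s/2) = ∫ _v in (0:ℝ)..(s/2), Kc A D₁ (s/2) := by
    rw [integral_const, real_smul_eq (s/2 - 0)]
    congr 1
    push_cast
    ring
  have hfirst : (B - Kc A B (s/2)) + ((s:ℂ)/2) • Kc A D₁ (s/2)
      = ∫ v in (0:ℝ)..(s/2), (Kc A D₁ (s/2) - Kc A D₁ v) := by
    rw [hB1, hconst,
      integral_sub (continuous_const.intervalIntegrable _ _)
        ((Kc_cont A _).intervalIntegrable _ _)]
    abel
  have hfirst_norm : ‖(B - Kc A B (s/2)) + ((s:ℂ)/2) • Kc A D₁ (s/2)‖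
      ≤ s^2/8 * ‖Lb A (Lb A B)‖ := by
    rw [hfirst]
    have hs2 : (0:ℝ) ≤ s/2 := by linarith
    calc ‖∫ v in (0:ℝ)..(s/2), (Kc A D₁ (s/2) - Kc A D₁ v)‖
        ≤ ∫ v in (0:ℝ)..(s/2), ((s/2 - v) * ‖Lb A D₁‖) := by
          apply norm_int_le (continuous_const.sub (Kc_cont A _))
            ((continuous_const.sub continuous_id).mul continuous_const) hs2
          intro v hv
          exact Kc_diff hA D₁ hv.2
      _ = (s/2)^2/2 * ‖Lb A D₁‖ := by
          rw [integral_mul_const]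
          congr 1
          have : ∀ v : ℝ, s/2 - v = -v + s/2 := fun v => by ring
          rw [integral_congr (g := fun v => -v + s/2) (fun v _ => this v)]
          rw [integral_add ((continuous_neg).intervalIntegrable _ _)
            (continuous_const.intervalIntegrable _ _), integral_neg,
            integral_id, integral_const]
          simp
          ring
      _ ≤ s^2/8 * ‖Lb A (Lb A B)‖ := by
          rw [hD₁, Dc, norm_Lb_smul_negI]
          nlinarith [norm_nonneg (Lb A (Lb A B))]
  have hρ₂_norm : ‖Kc A ρ₂ (s/2)‖ ≤ s^2/4 * ‖Lb B (Lb A B)‖ := by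
    rw [norm_Kc hA]
    have h := Kc_rem_bound hB ((2⁻¹ : ℂ) • A) hs
    rw [← hρ₂] at h
    have hLb : ‖Lb B (Lb B ((2⁻¹:ℂ) • A))‖ = 2⁻¹ * ‖Lb B (Lb A B)‖ := by
      have e1 : Lb B ((2⁻¹:ℂ) • A) = (-(2⁻¹:ℂ)) • Lb A B := by
        simp only [Lb, mul_smul_comm, smul_mul_assoc, ← smul_sub]
        rw [show B * A - A * B = -(A * B - B * A) by abel, smul_neg, ← neg_smul]
      have e2 : Lb B ((-(2⁻¹:ℂ)) • Lb A B) = (-(2⁻¹:ℂ)) • Lb B (Lb A B) := by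
        simp only [Lb, mul_smul_comm, smul_mul_assoc, ← smul_sub]
      rw [e1, e2, norm_smul]
      norm_num
    rw [hLb] at h
    calc ‖ρ₂‖ ≤ s^2/2 * (2⁻¹ * ‖Lb B (Lb A B)‖) := h
      _ = s^2/4 * ‖Lb B (Lb A B)‖ := by ring
  calc ‖(A + B) - Ham A B s‖
      = ‖((B - Kc A B (s/2)) + ((s:ℂ)/2) • Kc A D₁ (s/2)) - Kc A ρ₂ (s/2)‖ := by
        rw [hdecomp]; congr 1; abel
    _ ≤ ‖(B - Kc A B (s/2)) + ((s:ℂ)/2) • Kc A D₁ (s/2)‖ + ‖Kc A ρ₂ (s/2)‖ := norm_sub_le _ _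
    _ ≤ s^2/8 * ‖Lb A (Lb A B)‖ + s^2/4 * ‖Lb B (Lb A B)‖ :=
        add_le_add hfirst_norm hρ₂_norm

lemma norm_smul_I (M : E →L[ℂ] E) : ‖(I : ℂ) • M‖ = ‖M‖ := by
  rw [norm_smul]; simp

lemma Gf_hasDerivAt (A B : E →L[ℂ] E) (s : ℝ) :
    HasDerivAt (fun r => ee (A+B) (-r) * Uu A B r)
      (I • (ee (A+B) (-s) * (((A + B) - Ham A B s) * Uu A B s))) s := by
  have h := (ee_neg_hasDerivAt (A+B) s).mul (Uu_hasDerivAt A B s)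
  refine hda_conv h ?_
  simp only [sub_mul, mul_sub, smul_sub, smul_mul_assoc, mul_smul_comm]
  rw [(commute_ee (A+B) (-s)).eq]
  simp only [mul_assoc]
  simp [sub_eq_add_neg, neg_smul, neg_neg]

lemma step_bound {A B : E →L[ℂ] E} (hA : IsSelfAdjoint A) (hB : IsSelfAdjoint B) {θ : ℝ}
    (hθ : 0 ≤ θ) :
    ‖Uu A B θ - ee (A+B) θ‖ ≤ θ^3/24 * ‖Lb A (Lb A B)‖ + θ^3/12 * ‖Lb B (Lb A B)‖ := by
  have hH : IsSelfAdjoint (A + B) := hA.add hB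
  set c1 := ‖Lb A (Lb A B)‖ with hc1
  set c2 := ‖Lb B (Lb A B)‖ with hc2
  set g := fun s => I • (ee (A+B) (-s) * (((A + B) - Ham A B s) * Uu A B s)) with hg
  have hgc : Continuous g := by
    apply Continuous.fun_const_smul
    exact ((ee_cont (A+B)).comp continuous_neg).mul
      ((continuous_const.sub (Ham_cont A B)).mul (Uu_cont A B))
  have hftc : (fun r => ee (A+B) (-r) * Uu A B r) θ - (fun r => ee (A+B) (-r) * Uu A B r) 0
      = ∫ s in (0:ℝ)..θ, g s := ftc (Gf_hasDerivAt A B) hgc θ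
  simp only [neg_zero, ee_zero, Uu_zero, mul_one, one_mul] at hftc
  have key : Uu A B θ - ee (A+B) θ = ee (A+B) θ * (ee (A+B) (-θ) * Uu A B θ - 1) := by
    rw [mul_sub, ee_cancel, mul_one]
  rw [key, norm_ee_mul hH]
  have hend : ee (A+B) (-θ) * Uu A B θ - 1 = ∫ s in (0:ℝ)..θ, g s := hftc
  rw [hend]
  have hbound : ∀ s ∈ Set.Icc (0:ℝ) θ, ‖g s‖ ≤ s^2/8 * c1 + s^2/4 * c2 := by
    intro s hs
    rw [hg]
    simp only []
    rw [norm_smul_I, norm_ee_mul hH, norm_mul_Uu hA hB]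
    exact Ham_est hA hB hs.1
  calc ‖∫ s in (0:ℝ)..θ, g s‖ ≤ ∫ s in (0:ℝ)..θ, (s^2/8 * c1 + s^2/4 * c2) :=
        norm_int_le hgc (by fun_prop) hθ hbound
    _ = θ^3/24 * c1 + θ^3/12 * c2 := by
        rw [show (fun s : ℝ => s^2/8 * c1 + s^2/4 * c2)
            = fun s : ℝ => s^2 * (c1/8) + s^2 * (c2/4) from funext fun s => by ring]
        rw [integral_add (((continuous_pow 2).fun_mul continuous_const).intervalIntegrable _ _)
            (((continuous_pow 2).fun_mul continuous_const).intervalIntegrable _ _),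
          integral_mul_const, integral_mul_const, integral_pow]
        norm_num
        ring

lemma norm_Uu_le_one {A B : E →L[ℂ] E} (hA : IsSelfAdjoint A) (hB : IsSelfAdjoint B) (s : ℝ) :
    ‖Uu A B s‖ ≤ 1 := by
  have h : ‖Uu A B s‖ = ‖ee A (s/2)‖ := by
    rw [Uu, norm_mul_ee hA, norm_mul_ee hB]
  rw [h]; exact norm_ee_le_one hA _

lemma norm_pow_le_one {x : E →L[ℂ] E} (hx : ‖x‖ ≤ 1) (k : ℕ) : ‖x^k‖ ≤ 1 := by
  induction k with
  | zero =>
    rw [pow_zero, ContinuousLinearMap.one_def]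
    exact ContinuousLinearMap.norm_id_le
  | succ j ih =>
    rw [pow_succ]
    calc ‖x^j * x‖ ≤ ‖x^j‖ * ‖x‖ := norm_mul_le _ _
      _ ≤ 1 * 1 := mul_le_mul ih hx (norm_nonneg _) zero_le_one
      _ = 1 := by ring

lemma pow_tel {x y : E →L[ℂ] E} (hx : ‖x‖ ≤ 1) (hy : ‖y‖ ≤ 1) (n : ℕ) :
    ‖x^n - y^n‖ ≤ n * ‖x - y‖ := by
  induction n with
  | zero => simp
  | succ k ih =>
    have hid : x^(k+1) - y^(k+1) = x^k * (x - y) + (x^k - y^k) * y := by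
      rw [pow_succ, pow_succ]
      noncomm_ring
    calc ‖x^(k+1) - y^(k+1)‖ = ‖x^k * (x - y) + (x^k - y^k) * y‖ := by rw [hid]
      _ ≤ ‖x^k * (x - y)‖ + ‖(x^k - y^k) * y‖ := norm_add_le _ _
      _ ≤ ‖x^k‖ * ‖x - y‖ + ‖x^k - y^k‖ * ‖y‖ := add_le_add (norm_mul_le _ _) (norm_mul_le _ _)
      _ ≤ 1 * ‖x - y‖ + (k * ‖x - y‖) * 1 := by
          apply add_le_add
          · exact mul_le_mul_of_nonneg_right (norm_pow_le_one hx k) (norm_nonneg _)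
          · exact mul_le_mul ih hy (norm_nonneg _) (by positivity)
      _ = (k + 1 : ℕ) * ‖x - y‖ := by push_cast; ring

lemma ee_pow (X : E →L[ℂ] E) (θ : ℝ) (n : ℕ) : ee X θ ^ n = ee X (n * θ) := by
  induction n with
  | zero => simp [ee_zero]
  | succ k ih =>
    rw [pow_succ, ih, ee_add]
    congr 1
    push_cast
    ring

lemma conj_pow (p x q : E →L[ℂ] E) (hqp : q * p = 1) (hpq : p * q = 1) (n : ℕ) :
    (p * x * q)^n = p * x^n * q := by
  induction n with
  | zero => rw [pow_zero, pow_zero, mul_one, hpq]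
  | succ k ih =>
    rw [pow_succ, ih, pow_succ]
    rw [show p * x^k * q * (p * x * q) = p * x^k * (q * p) * (x * q) by simp [mul_assoc]]
    rw [hqp, mul_one]
    simp [mul_assoc]

lemma ee_sub_one_norm {X : E →L[ℂ] E} (hX : IsSelfAdjoint X) {s : ℝ} (hs : 0 ≤ s) :
    ‖ee X s - 1‖ ≤ s * ‖X‖ := by
  have h := ftc (f := ee X) (g := fun u => ((-I) • X) * ee X u) (ee_hasDerivAt X)
    (continuous_const.mul (ee_cont X)) s
  rw [ee_zero] at h
  rw [h]
  calc ‖∫ u in (0:ℝ)..s, ((-I) • X) * ee X u‖ ≤ ∫ _u in (0:ℝ)..s, ‖X‖ := by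
        apply norm_int_le (continuous_const.fun_mul (ee_cont X)) continuous_const hs
        intro u _
        rw [norm_mul_ee hX, norm_smul_negI]
    _ = s * ‖X‖ := by simp

lemma ee_diff_lower {X Y : E →L[ℂ] E} (hX : IsSelfAdjoint X) (hY : IsSelfAdjoint Y) {τ : ℝ}
    (hτ : 0 ≤ τ) :
    τ * ‖X - Y‖ - τ^2 * ((‖X‖ + ‖Y‖)/2) * ‖X - Y‖ ≤ ‖ee X τ - ee Y τ‖ := by
  set Φ := fun s => ee X s * (X - Y) * ee Y (τ - s) with hΦ
  have hΦc : Continuous Φ := ((ee_cont X).mul continuous_const).mul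
    ((ee_cont Y).comp (continuous_const.sub continuous_id))
  have hd : ∀ s, HasDerivAt (fun r => ee X r * ee Y (τ - r)) ((-I) • Φ s) s := by
    intro s
    have h2 : HasDerivAt (fun r => ee Y (τ - r)) (I • Y * ee Y (τ - s)) s := by
      have := (ee_hasDerivAt Y (τ - s)).scomp s ((hasDerivAt_id s).const_sub τ)
      refine hda_conv this ?_
      norm_num [real_smul_eq, smul_mul_assoc, smul_smul]
    have h := (ee_hasDerivAt X s).mul h2
    refine hda_conv h ?_
    rw [hΦ]
    simp only [smul_sub, sub_mul, mul_sub, smul_mul_assoc, mul_smul_comm]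
    rw [(commute_ee X s).eq]
    simp only [mul_assoc]
    simp [sub_eq_add_neg, neg_smul, neg_neg]
  have hftc : ee X τ - ee Y τ = ∫ s in (0:ℝ)..τ, (-I) • Φ s := by
    have h := ftc hd ((continuous_const.fun_smul hΦc : Continuous fun s => (-I) • Φ s)) τ
    simpa [ee_zero, sub_zero] using h
  have h2 : ‖ee X τ - ee Y τ‖ = ‖∫ s in (0:ℝ)..τ, Φ s‖ := by
    rw [hftc, integral_smul, norm_smul_negI]
  have h3 : (∫ s in (0:ℝ)..τ, Φ s) = τ • (X - Y) + ∫ s in (0:ℝ)..τ, (Φ s - (X - Y)) := by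
    rw [integral_sub (hΦc.intervalIntegrable _ _) (continuous_const.intervalIntegrable _ _),
      integral_const]
    simp
  have hbound : ∀ s ∈ Set.Icc (0:ℝ) τ, ‖Φ s - (X - Y)‖
      ≤ (s * ‖X‖ + (τ - s) * ‖Y‖) * ‖X - Y‖ := by
    intro s hs
    have hid : Φ s - (X - Y) = (ee X s - 1) * ((X - Y) * ee Y (τ - s))
        + ((X - Y) * (ee Y (τ - s) - 1)) := by
      rw [hΦ]
      noncomm_ring
    rw [hid]
    calc ‖(ee X s - 1) * ((X - Y) * ee Y (τ - s)) + ((X - Y) * (ee Y (τ - s) - 1))‖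
        ≤ ‖(ee X s - 1) * ((X - Y) * ee Y (τ - s))‖ + ‖(X - Y) * (ee Y (τ - s) - 1)‖ :=
          norm_add_le _ _
      _ ≤ ‖ee X s - 1‖ * ‖(X - Y) * ee Y (τ - s)‖ + ‖X - Y‖ * ‖ee Y (τ - s) - 1‖ :=
          add_le_add (norm_mul_le _ _) (norm_mul_le _ _)
      _ ≤ (s * ‖X‖) * ‖X - Y‖ + ‖X - Y‖ * ((τ - s) * ‖Y‖) := by
          rw [norm_mul_ee hY]
          apply add_le_add
          · exact mul_le_mul_of_nonneg_right (ee_sub_one_norm hX hs.1) (norm_nonneg _)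
          · exact mul_le_mul_of_nonneg_left (ee_sub_one_norm hY (by linarith [hs.2]))
              (norm_nonneg _)
      _ = (s * ‖X‖ + (τ - s) * ‖Y‖) * ‖X - Y‖ := by ring
  have h4 : ‖∫ s in (0:ℝ)..τ, (Φ s - (X - Y))‖ ≤ τ^2 * ((‖X‖ + ‖Y‖)/2) * ‖X - Y‖ := by
    calc ‖∫ s in (0:ℝ)..τ, (Φ s - (X - Y))‖
        ≤ ∫ s in (0:ℝ)..τ, (s * ‖X‖ + (τ - s) * ‖Y‖) * ‖X - Y‖ :=
          norm_int_le (hΦc.sub continuous_const) (by fun_prop) hτ hbound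
      _ = τ^2 * ((‖X‖ + ‖Y‖)/2) * ‖X - Y‖ := by
          rw [show (fun s : ℝ => (s * ‖X‖ + (τ - s) * ‖Y‖) * ‖X - Y‖)
              = fun s : ℝ => s * ((‖X‖ - ‖Y‖) * ‖X - Y‖) + τ * ‖Y‖ * ‖X - Y‖ from
            funext fun s => by ring]
          rw [integral_add ((by fun_prop : Continuous fun s : ℝ =>
              s * ((‖X‖ - ‖Y‖) * ‖X - Y‖)).intervalIntegrable _ _)
            (continuous_const.intervalIntegrable _ _),
            integral_mul_const, integral_id, integral_const]
          simp
          ring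
  have h5 : ‖τ • (X - Y)‖ = τ * ‖X - Y‖ := by
    rw [norm_smul, Real.norm_of_nonneg hτ]
  have h6 : τ * ‖X - Y‖ ≤ ‖∫ s in (0:ℝ)..τ, Φ s‖ + τ^2 * ((‖X‖ + ‖Y‖)/2) * ‖X - Y‖ := by
    calc τ * ‖X - Y‖ = ‖τ • (X - Y)‖ := h5.symm
      _ = ‖(∫ s in (0:ℝ)..τ, Φ s) - ∫ s in (0:ℝ)..τ, (Φ s - (X - Y))‖ := by
          rw [h3]; congr 1; abel
      _ ≤ ‖∫ s in (0:ℝ)..τ, Φ s‖ + ‖∫ s in (0:ℝ)..τ, (Φ s - (X - Y))‖ := norm_sub_le _ _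
      _ ≤ ‖∫ s in (0:ℝ)..τ, Φ s‖ + τ^2 * ((‖X‖ + ‖Y‖)/2) * ‖X - Y‖ := by linarith
  rw [h2]
  linarith

lemma Kc_lower {H C : E →L[ℂ] E} (hH : IsSelfAdjoint H) {t : ℝ} (ht : 0 ≤ t) :
    t * ‖Lb H C‖ - t^2/2 * ‖Lb H (Lb H C)‖ ≤ ‖Kc H C t - C‖ := by
  have h := Kc_expand H C t
  have hR := Kc_rem_bound hH C ht
  have hid : Kc H C t - C = t • Dc H C + ∫ v in (0:ℝ)..t, (Kc H (Dc H C) v - Dc H C) := by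
    rw [h]; abel
  have h5 : ‖t • Dc H C‖ = t * ‖Lb H C‖ := by
    rw [norm_smul, Real.norm_of_nonneg ht, Dc, norm_smul_negI]
  calc t * ‖Lb H C‖ - t^2/2 * ‖Lb H (Lb H C)‖
      ≤ ‖t • Dc H C‖ - ‖∫ v in (0:ℝ)..t, (Kc H (Dc H C) v - Dc H C)‖ := by
        rw [h5]; linarith
    _ ≤ ‖t • Dc H C + ∫ v in (0:ℝ)..t, (Kc H (Dc H C) v - Dc H C)‖ := by
        have := norm_sub_le (t • Dc H C + ∫ v in (0:ℝ)..t, (Kc H (Dc H C) v - Dc H C))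
          (∫ v in (0:ℝ)..t, (Kc H (Dc H C) v - Dc H C))
        simp only [add_sub_cancel_right] at this
        linarith
    _ = ‖Kc H C t - C‖ := by rw [← hid]

lemma ee_conj (H A : E →L[ℂ] E) (t r : ℝ) :
    ee H t * ee A r * ee H (-t) = ee (ee H t * A * ee H (-t)) r := by
  let u : (E →L[ℂ] E)ˣ := ⟨ee H t, ee H (-t), ee_mul_neg H t, ee_neg_mul H t⟩
  letI : NormedAlgebra ℚ (E →L[ℂ] E) := NormedAlgebra.restrictScalars ℚ ℂ _
  have h := exp_units_conj u ((-(I * r)) • A)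
  have harg : (↑u * ((-(I * r)) • A) * ↑u⁻¹ : E →L[ℂ] E)
      = (-(I * r)) • (ee H t * A * ee H (-t)) := by
    show ee H t * ((-(I * r)) • A) * ee H (-t) = _
    rw [mul_smul_comm, smul_mul_assoc]
  rw [harg] at h
  exact h.symm

end TrotterLB

open TrotterLB

/-- Lower bound on the norm Trotter error: for `0 ≤ t ≤ 2n/‖A‖`,
`bₙ(t) ≥ (t²/2n)(1 - (t/2n)‖A‖)(‖[A,B]‖ - (t/2)‖[A+B,[A,B]]‖)
  - (t³/24n²)‖[A,[A,B]]‖ - (t³/12n²)‖[B,[B,A]]‖`. -/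
theorem stmt12 {E : Type*} [NormedAddCommGroup E] [InnerProductSpace ℂ E] [CompleteSpace E]
    (A B : E →L[ℂ] E) (hA : IsSelfAdjoint A) (hB : IsSelfAdjoint B)
    (n : ℕ) (hn : 1 ≤ n) (t : ℝ) (ht : 0 ≤ t) (ht' : t * ‖A‖ ≤ 2 * n) :
    t ^ 2 / (2 * n) * (1 - t / (2 * n) * ‖A‖)
        * (‖A * B - B * A‖
            - t / 2 * ‖(A + B) * (A * B - B * A) - (A * B - B * A) * (A + B)‖)
      - t ^ 3 / (24 * n ^ 2) * ‖A * (A * B - B * A) - (A * B - B * A) * A‖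
      - t ^ 3 / (12 * n ^ 2) * ‖B * (B * A - A * B) - (B * A - A * B) * B‖
      ≤ ‖(NormedSpace.exp ((-(Complex.I * (t / n))) • A)
            * NormedSpace.exp ((-(Complex.I * (t / n))) • B)) ^ n
          - NormedSpace.exp ((-(Complex.I * t)) • (A + B))‖ := by
  have hN : (1:ℝ) ≤ (n:ℝ) := by exact_mod_cast hn
  have hN0 : (0:ℝ) < (n:ℝ) := by linarith
  set θ : ℝ := t / n with hθdef
  have hθ0 : 0 ≤ θ := div_nonneg ht hN0.le
  have hH : IsSelfAdjoint (A + B) := hA.add hB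
  -- identify the goal's operators with `ee`
  have egoal : (NormedSpace.exp ((-(Complex.I * (t / n))) • A)
        * NormedSpace.exp ((-(Complex.I * (t / n))) • B)) ^ n
        - NormedSpace.exp ((-(Complex.I * t)) • (A + B))
      = (ee A θ * ee B θ) ^ n - ee (A + B) t := by
    rw [ee, ee, ee, hθdef]
    norm_cast
  rw [egoal]
  -- abbreviations
  set X₀ : E →L[ℂ] E := ee (A+B) t * A * ee (A+B) (-t) with hX₀def
  have hX₀Kc : X₀ = Kc (A+B) A t := rfl
  have hX₀sa : IsSelfAdjoint X₀ := by
    rw [hX₀def]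
    show star _ = _
    simp only [star_mul, star_ee hH, hA.star_eq, neg_neg]
    rw [mul_assoc]
  have hX₀n : ‖X₀‖ = ‖A‖ := by rw [hX₀Kc, norm_Kc hH]
  -- conjugation identity for the product formula
  have hS1 : ee A θ * ee B θ = ee A (θ/2) * Uu A B θ * ee A (-(θ/2)) := by
    rw [Uu]
    rw [show ee A (θ/2) * (ee A (θ/2) * ee B θ * ee A (θ/2)) * ee A (-(θ/2))
        = (ee A (θ/2) * ee A (θ/2)) * ee B θ * (ee A (θ/2) * ee A (-(θ/2))) by
      simp only [mul_assoc]]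
    rw [ee_add, ee_mul_neg, mul_one]
    norm_num
  have hS1n : (ee A θ * ee B θ) ^ n = ee A (θ/2) * (Uu A B θ)^n * ee A (-(θ/2)) := by
    rw [hS1, conj_pow _ _ _ (ee_neg_mul A (θ/2)) (ee_mul_neg A (θ/2))]
  -- step 1: unitary invariance
  have hb1 : ‖(ee A θ * ee B θ) ^ n - ee (A+B) t‖
      = ‖(Uu A B θ)^n * ee A (-(θ/2)) - ee A (-(θ/2)) * ee (A+B) t‖ := by
    rw [hS1n]
    rw [show ee A (θ/2) * (Uu A B θ)^n * ee A (-(θ/2)) - ee (A+B) t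
        = ee A (θ/2) * ((Uu A B θ)^n * ee A (-(θ/2)) - ee A (-(θ/2)) * ee (A+B) t) by
      rw [mul_sub, ee_cancel, mul_assoc]]
    rw [norm_ee_mul hA]
  -- step 2: triangle inequality isolating the commutator
  have hb2 : ‖ee (A+B) t * ee A (-(θ/2)) - ee A (-(θ/2)) * ee (A+B) t‖
        - ‖(Uu A B θ)^n - ee (A+B) t‖
      ≤ ‖(Uu A B θ)^n * ee A (-(θ/2)) - ee A (-(θ/2)) * ee (A+B) t‖ := by
    have hid : (Uu A B θ)^n * ee A (-(θ/2)) - ee A (-(θ/2)) * ee (A+B) t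
        = (ee (A+B) t * ee A (-(θ/2)) - ee A (-(θ/2)) * ee (A+B) t)
          + ((Uu A B θ)^n - ee (A+B) t) * ee A (-(θ/2)) := by
      noncomm_ring
    rw [hid]
    have h := norm_sub_le ((ee (A+B) t * ee A (-(θ/2)) - ee A (-(θ/2)) * ee (A+B) t)
        + ((Uu A B θ)^n - ee (A+B) t) * ee A (-(θ/2)))
      (((Uu A B θ)^n - ee (A+B) t) * ee A (-(θ/2)))
    simp only [add_sub_cancel_right] at h
    rw [norm_mul_ee hA] at h
    linarith
  -- step 3: rewrite the commutator via conjugation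
  have hb3 : ‖ee (A+B) t * ee A (-(θ/2)) - ee A (-(θ/2)) * ee (A+B) t‖
      = ‖ee X₀ (θ/2) - ee A (θ/2)‖ := by
    rw [← norm_star (ee (A+B) t * ee A (-(θ/2)) - ee A (-(θ/2)) * ee (A+B) t)]
    rw [star_sub, star_mul, star_mul, star_ee hA, star_ee hH, neg_neg]
    rw [← norm_ee_mul hH t]
    rw [mul_sub, ← mul_assoc, ← mul_assoc, ee_conj, ee_mul_neg, one_mul]
  -- step 4: lower bound on the commutator norm
  have hlow1 : (θ/2) * ‖X₀ - A‖ - (θ/2)^2 * ((‖A‖ + ‖A‖)/2) * ‖X₀ - A‖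
      ≤ ‖ee X₀ (θ/2) - ee A (θ/2)‖ := by
    have h := ee_diff_lower hX₀sa hA (by linarith : (0:ℝ) ≤ θ/2)
    rwa [hX₀n] at h
  have hlow2 : t * ‖Lb (A+B) A‖ - t^2/2 * ‖Lb (A+B) (Lb (A+B) A)‖ ≤ ‖X₀ - A‖ := by
    have h := Kc_lower (C := A) hH ht
    rwa [← hX₀Kc] at h
  -- step 5: upper bound on the second-order Trotter error
  have hT : ee (A+B) t = (ee (A+B) θ) ^ n := by
    rw [ee_pow]
    congr 1
    rw [hθdef]
    field_simp
  have hstep : ‖(Uu A B θ)^n - ee (A+B) t‖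
      ≤ (n:ℝ) * (θ^3/24 * ‖Lb A (Lb A B)‖ + θ^3/12 * ‖Lb B (Lb A B)‖) := by
    rw [hT]
    calc ‖(Uu A B θ)^n - (ee (A+B) θ)^n‖ ≤ (n:ℝ) * ‖Uu A B θ - ee (A+B) θ‖ :=
          pow_tel (norm_Uu_le_one hA hB θ) (norm_ee_le_one hH θ) n
      _ ≤ (n:ℝ) * (θ^3/24 * ‖Lb A (Lb A B)‖ + θ^3/12 * ‖Lb B (Lb A B)‖) :=
          mul_le_mul_of_nonneg_left (step_bound hA hB hθ0) hN0.le
  -- identify commutator norms with the statement's expressions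
  have hn1 : ‖Lb (A+B) A‖ = ‖A * B - B * A‖ := by
    rw [show Lb (A+B) A = -(A * B - B * A) by rw [Lb]; noncomm_ring, norm_neg]
  have hn2 : ‖Lb (A+B) (Lb (A+B) A)‖
      = ‖(A + B) * (A * B - B * A) - (A * B - B * A) * (A + B)‖ := by
    rw [show Lb (A+B) (Lb (A+B) A)
        = -((A + B) * (A * B - B * A) - (A * B - B * A) * (A + B)) by
      simp only [Lb]; noncomm_ring, norm_neg]
  have hn3 : ‖Lb A (Lb A B)‖ = ‖A * (A * B - B * A) - (A * B - B * A) * A‖ := rfl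
  have hn4 : ‖Lb B (Lb A B)‖ = ‖B * (B * A - A * B) - (B * A - A * B) * B‖ := by
    rw [show Lb B (Lb A B) = -(B * (B * A - A * B) - (B * A - A * B) * B) by
      simp only [Lb]; noncomm_ring, norm_neg]
  rw [hn1, hn2] at hlow2
  rw [hn3, hn4] at hstep
  -- final arithmetic
  set a := ‖A‖ with ha
  set d := ‖X₀ - A‖ with hd
  set P := ‖A * B - B * A‖
    - t / 2 * ‖(A + B) * (A * B - B * A) - (A * B - B * A) * (A + B)‖ with hP
  set C1 := ‖A * (A * B - B * A) - (A * B - B * A) * A‖ with hC1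
  set C2 := ‖B * (B * A - A * B) - (B * A - A * B) * B‖ with hC2
  have hεq : (n:ℝ) * (θ^3/24 * C1 + θ^3/12 * C2)
      = t^3/(24*(n:ℝ)^2) * C1 + t^3/(12*(n:ℝ)^2) * C2 := by
    rw [hθdef]
    field_simp
  rw [hεq] at hstep
  have hd0 : 0 ≤ d := norm_nonneg _
  have ha0 : 0 ≤ a := norm_nonneg _
  have hC10 : 0 ≤ C1 := norm_nonneg _
  have hC20 : 0 ≤ C2 := norm_nonneg _
  have hfac : 0 ≤ 1 - t/(2*(n:ℝ)) * a := by
    have h1 : t/(2*(n:ℝ)) * a = (t*a)/(2*(n:ℝ)) := by ring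
    rw [h1]
    rw [sub_nonneg, div_le_one (by linarith)]
    linarith
  have hθfac : θ/2 = t/(2*(n:ℝ)) := by rw [hθdef]; ring
  have hchain : ‖ee X₀ (θ/2) - ee A (θ/2)‖ - (t^3/(24*(n:ℝ)^2) * C1 + t^3/(12*(n:ℝ)^2) * C2)
      ≤ ‖(ee A θ * ee B θ) ^ n - ee (A+B) t‖ := by
    rw [hb1, ← hb3]
    linarith [hb2, hstep]
  have htP : t * P = t * ‖A * B - B * A‖
      - t^2/2 * ‖(A + B) * (A * B - B * A) - (A * B - B * A) * (A + B)‖ := by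
    rw [hP]; ring
  by_cases hPc : 0 ≤ P
  · -- main case
    have hdP : t * P ≤ d := by rw [htP]; exact hlow2
    have hcoef0 : 0 ≤ t/(2*(n:ℝ)) * (1 - t/(2*(n:ℝ)) * a) :=
      mul_nonneg (by positivity) hfac
    have hkey : t/(2*(n:ℝ)) * (1 - t/(2*(n:ℝ)) * a) * (t * P)
        ≤ (θ/2) * d - (θ/2)^2 * ((a + a)/2) * d := by
      have h1 : t/(2*(n:ℝ)) * (1 - t/(2*(n:ℝ)) * a) * (t * P)
          ≤ t/(2*(n:ℝ)) * (1 - t/(2*(n:ℝ)) * a) * d :=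
        mul_le_mul_of_nonneg_left hdP hcoef0
      calc t/(2*(n:ℝ)) * (1 - t/(2*(n:ℝ)) * a) * (t * P)
          ≤ t/(2*(n:ℝ)) * (1 - t/(2*(n:ℝ)) * a) * d := h1
        _ = (θ/2) * d - (θ/2)^2 * ((a + a)/2) * d := by rw [hθfac]; ring
    have hgoal_eq : t ^ 2 / (2 * (n:ℝ)) * (1 - t / (2 * (n:ℝ)) * a) * P
        = t/(2*(n:ℝ)) * (1 - t/(2*(n:ℝ)) * a) * (t * P) := by ring
    rw [hgoal_eq]
    linarith [hlow1, hchain, hkey]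
  · -- degenerate case: the left-hand side is nonpositive
    push_neg at hPc
    have h1 : 0 ≤ t^2/(2*(n:ℝ)) * (1 - t/(2*(n:ℝ)) * a) :=
      mul_nonneg (by positivity) hfac
    have h2 : t^2/(2*(n:ℝ)) * (1 - t/(2*(n:ℝ)) * a) * P ≤ 0 :=
      mul_nonpos_of_nonneg_of_nonpos h1 hPc.le
    have h3 : (0:ℝ) ≤ ‖(ee A θ * ee B θ) ^ n - ee (A+B) t‖ := norm_nonneg _
    have h4 : 0 ≤ t^3/(24*(n:ℝ)^2) * C1 := by positivity
    have h5 : 0 ≤ t^3/(12*(n:ℝ)^2) * C2 := by positivity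
    linarith
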